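/- Every invertible complex n×n matrix A has a square root: there exists a complex n×n matrix X such that X² = A. -/

import Mathlib

open Matrix

private lemma aux_det {N : ℕ} (M : Matrix (Fin (N+1)) (Fin (N+1)) ℂ)
    (h : ∀ i : Fin N, M i.succ 0 = 0) :
    M.det = M 0 0 * (M.submatrix Fin.succ Fin.succ).det := by
  rw [det_succ_column_zero, Fin.sum_univ_succ]
  simp [h, Fin.succAbove_zero]

private lemma aux_not_isUnit_iff {m : ℕ} (M : Matrix (Fin m) (Fin m) ℂ) :
    ¬ IsUnit M ↔ M.det = 0 := by
  rw [Matrix.isUnit_iff_isUnit_det, isUnit_iff_ne_zero, not_not]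

private lemma aux_mem_spectrum_iff {m : ℕ} (M : Matrix (Fin m) (Fin m) ℂ) (z : ℂ) :
    z ∈ spectrum ℂ M ↔ (z • (1 : Matrix (Fin m) (Fin m) ℂ) - M).det = 0 := by
  rw [spectrum.mem_iff, Algebra.algebraMap_eq_smul_one, aux_not_isUnit_iff]

private theorem key_sqrt (s : ℂ → ℂ) (hs : ∀ z, s z ^ 2 = z) :
    ∀ N (A : Matrix (Fin N) (Fin N) ℂ), IsUnit A →
      ∃ X, X ^ 2 = A ∧ spectrum ℂ X ⊆ s '' spectrum ℂ A := by
  intro N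
  induction N with
  | zero =>
    intro A _
    refine ⟨A, Subsingleton.elim _ _, fun z hz => ?_⟩
    exact absurd (isUnit_of_subsingleton _) (spectrum.mem_iff.mp hz)
  | succ N IH =>
    intro A hA
    -- find an eigenvector
    obtain ⟨μ₀, hμ₀⟩ := Module.End.exists_eigenvalue (Matrix.mulVecLin A)
    obtain ⟨v, hv⟩ := hμ₀.exists_hasEigenvector
    have hAv : A *ᵥ v = μ₀ • v := hv.apply_eq_smul
    have hv0 : v ≠ 0 := hv.right
    have hdetA : IsUnit A.det := (Matrix.isUnit_iff_isUnit_det A).mp hA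
    have hμne : μ₀ ≠ 0 := by
      intro h
      apply hv0
      have : A⁻¹ *ᵥ (A *ᵥ v) = v := by
        rw [mulVec_mulVec, nonsing_inv_mul A hdetA, one_mulVec]
      rw [hAv, h, zero_smul, mulVec_zero] at this
      exact this.symm
    -- build a basis whose 0-th vector is v
    have hli : LinearIndepOn ℂ id ({v} : Set (Fin (N+1) → ℂ)) :=
      (linearIndepOn_singleton_iff (R := ℂ) (v := id)).mpr hv0
    let b₀ := Module.Basis.extend hli
    haveI := FiniteDimensional.fintypeBasisIndex b₀
    have hvmem : v ∈ hli.extend (Set.subset_univ ({v} : Set (Fin (N+1) → ℂ))) :=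
      hli.subset_extend _ rfl
    have hcard : Fintype.card (hli.extend (Set.subset_univ ({v} : Set (Fin (N+1) → ℂ)))) = N+1 := by
      rw [← Module.finrank_eq_card_basis b₀, Module.finrank_fin_fun]
    let e := Fintype.equivFinOfCardEq hcard
    let b : Module.Basis (Fin (N+1)) ℂ (Fin (N+1) → ℂ) :=
      b₀.reindex (e.trans (Equiv.swap (e ⟨v, hvmem⟩) 0))
    have hb0 : b 0 = v := by
      have : (e.trans (Equiv.swap (e ⟨v, hvmem⟩) 0)).symm 0 = ⟨v, hvmem⟩ := by
        rw [Equiv.symm_trans_apply, Equiv.symm_swap, Equiv.swap_apply_right, Equiv.symm_apply_apply]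
      rw [Module.Basis.reindex_apply, this]
      exact Module.Basis.extend_apply_self hli ⟨v, hvmem⟩
    -- change of basis
    let P : Matrix (Fin (N+1)) (Fin (N+1)) ℂ := (Pi.basisFun ℂ (Fin (N+1))).toMatrix ⇑b
    let Q : Matrix (Fin (N+1)) (Fin (N+1)) ℂ := b.toMatrix ⇑(Pi.basisFun ℂ (Fin (N+1)))
    have hPQ : P * Q = 1 := Module.Basis.toMatrix_mul_toMatrix_flip _ _
    have hQP : Q * P = 1 := Module.Basis.toMatrix_mul_toMatrix_flip _ _
    let u : (Matrix (Fin (N+1)) (Fin (N+1)) ℂ)ˣ := ⟨P, Q, hPQ, hQP⟩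
    have hPunit : IsUnit P := u.isUnit
    have hQunit : IsUnit Q := (u⁻¹).isUnit
    have hPcol : ∀ i, P i 0 = v i := by
      intro i
      simp [P, Module.Basis.toMatrix_apply, hb0]
    set A' := Q * A * P with hA'def
    have hA'u : IsUnit A' := (hQunit.mul hA).mul hPunit
    -- A' has first column (μ₀, 0, ..., 0)
    have hA'e : A' *ᵥ (Pi.single 0 1 : Fin (N+1) → ℂ) = μ₀ • (Pi.single 0 1 : Fin (N+1) → ℂ) := by
      have h1 : P *ᵥ (Pi.single 0 1 : Fin (N+1) → ℂ) = v := by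
        ext i; simp [hPcol i]
      have h2 : Q *ᵥ v = (Pi.single 0 1 : Fin (N+1) → ℂ) := by
        rw [← h1, mulVec_mulVec, hQP, one_mulVec]
      calc A' *ᵥ (Pi.single 0 1 : Fin (N+1) → ℂ)
          = Q *ᵥ (A *ᵥ (P *ᵥ (Pi.single 0 1 : Fin (N+1) → ℂ))) := by
            rw [mulVec_mulVec, mulVec_mulVec]
        _ = Q *ᵥ (μ₀ • v) := by rw [h1, hAv]
        _ = μ₀ • (Q *ᵥ v) := mulVec_smul _ _ _
        _ = μ₀ • (Pi.single 0 1 : Fin (N+1) → ℂ) := by rw [h2]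
    have hA00 : A' 0 0 = μ₀ := by
      have := congrFun hA'e 0
      simpa using this
    have hAs0 : ∀ i : Fin N, A' i.succ 0 = 0 := by
      intro i
      have := congrFun hA'e i.succ
      simpa [Pi.single_eq_of_ne (Fin.succ_ne_zero i)] using this
    set B := A'.submatrix Fin.succ Fin.succ with hBdef
    have hdetA' : A'.det = μ₀ * B.det := by
      rw [aux_det A' hAs0, hA00]
    have hBu : IsUnit B := by
      rw [Matrix.isUnit_iff_isUnit_det, isUnit_iff_ne_zero]
      intro h
      have : A'.det = 0 := by rw [hdetA', h, mul_zero]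
      exact ((aux_not_isUnit_iff A').mpr this) hA'u
    obtain ⟨Y, hY2, hYspec⟩ := IH B hBu
    set μ := s μ₀ with hμdef
    have hμsq : μ ^ 2 = μ₀ := hs μ₀
    -- spectrum of B (resp. μ₀) is inside spectrum of A'
    have hspecB : spectrum ℂ B ⊆ spectrum ℂ A' := by
      intro β hβ
      rw [aux_mem_spectrum_iff] at hβ ⊢
      have hcols : ∀ i : Fin N, (β • (1 : Matrix (Fin (N+1)) (Fin (N+1)) ℂ) - A') i.succ 0 = 0 := by
        intro i
        simp [hAs0 i, Matrix.one_apply_ne (Fin.succ_ne_zero i)]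
      rw [aux_det _ hcols]
      have hsub : (β • (1 : Matrix (Fin (N+1)) (Fin (N+1)) ℂ) - A').submatrix Fin.succ Fin.succ
          = β • (1 : Matrix (Fin N) (Fin N) ℂ) - B := by
        ext i j
        by_cases h : i = j <;>
          simp [hBdef, Matrix.one_apply, h, Fin.succ_inj]
      rw [hsub, hβ, mul_zero]
    have hμ₀spec : μ₀ ∈ spectrum ℂ A' := by
      rw [aux_mem_spectrum_iff]
      have hcols : ∀ i : Fin N, (μ₀ • (1 : Matrix (Fin (N+1)) (Fin (N+1)) ℂ) - A') i.succ 0 = 0 := by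
        intro i
        simp [hAs0 i, Matrix.one_apply_ne (Fin.succ_ne_zero i)]
      rw [aux_det _ hcols]
      simp [hA00]
    -- μ • 1 + Y is invertible
    have hYunit : IsUnit (μ • (1 : Matrix (Fin N) (Fin N) ℂ) + Y) := by
      by_contra h
      have hmem : -μ ∈ spectrum ℂ Y := by
        rw [spectrum.mem_iff, Algebra.algebraMap_eq_smul_one]
        intro hu
        apply h
        have : μ • (1 : Matrix (Fin N) (Fin N) ℂ) + Y = -((-μ) • 1 - Y) := by
          rw [neg_smul]; abel
        rw [this]
        exact hu.neg
      obtain ⟨β, hβ, hsβ⟩ := hYspec hmem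
      have hβval : β = μ₀ := by
        have h1 := hs β
        rw [hsβ] at h1
        rw [← h1, neg_pow, hμsq]
        norm_num
      rw [hβval, ← hμdef] at hsβ
      have : μ = 0 := by linear_combination hsβ / 2
      exact hμne (by rw [← hμsq, this, zero_pow two_ne_zero])
    -- solve for the top-right row
    set w : Fin N → ℂ := fun j => A' 0 j.succ with hwdef
    set w' : Fin N → ℂ := w ᵥ* (μ • (1 : Matrix (Fin N) (Fin N) ℂ) + Y)⁻¹ with hw'def
    have hw' : w' ᵥ* (μ • (1 : Matrix (Fin N) (Fin N) ℂ) + Y) = w := by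
      rw [hw'def, vecMul_vecMul,
        nonsing_inv_mul _ ((Matrix.isUnit_iff_isUnit_det _).mp hYunit), vecMul_one]
    have hw'j : ∀ j, μ * w' j + ∑ k, w' k * Y k j = w j := by
      intro j
      have := congrFun hw' j
      rw [vecMul, dotProduct] at this
      calc μ * w' j + ∑ k, w' k * Y k j
          = ∑ k, w' k * (μ • (1 : Matrix (Fin N) (Fin N) ℂ) + Y) k j := by
            simp only [Matrix.add_apply, Matrix.smul_apply, Matrix.one_apply, smul_eq_mul,
              mul_add, Finset.sum_add_distrib, mul_ite, mul_one, mul_zero]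
            rw [Finset.sum_ite_eq' Finset.univ j (fun k => w' k * μ)]
            simp [mul_comm]
        _ = w j := this
    -- build the square root of A'
    set X' : Matrix (Fin (N+1)) (Fin (N+1)) ℂ :=
      Matrix.of (Fin.cons (Fin.cons μ w') (fun i => Fin.cons 0 (Y i))) with hX'def
    have hX'00 : X' 0 0 = μ := rfl
    have hX'0s : ∀ j : Fin N, X' 0 j.succ = w' j := fun j => by
      simp [hX'def, Matrix.of_apply]
    have hX's0 : ∀ i : Fin N, X' i.succ 0 = 0 := fun i => by
      simp [hX'def, Matrix.of_apply]
    have hX'ss : ∀ i j : Fin N, X' i.succ j.succ = Y i j := fun i j => by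
      simp [hX'def, Matrix.of_apply]
    have hX'sq : X' ^ 2 = A' := by
      rw [pow_two]
      ext i j
      rw [mul_apply, Fin.sum_univ_succ]
      refine Fin.cases ?_ (fun i => ?_) i <;> refine Fin.cases ?_ (fun j => ?_) j
      · rw [hX'00]
        simp only [hX's0, mul_zero, Finset.sum_const_zero, add_zero]
        rw [← pow_two, hμsq, hA00]
      · simp only [hX'00, hX'0s, hX's0, hX'ss]
        rw [hw'j j, hwdef]
      · simp only [hX's0, hX'00, hX'ss, zero_mul, zero_add]
        simp [hAs0 i]
      · simp only [hX's0, hX'0s, hX'ss, zero_mul, zero_add]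
        have : ∑ k, Y i k * Y k j = (Y * Y) i j := (mul_apply).symm
        rw [this, ← pow_two, hY2, hBdef]
        rfl
    -- spectrum of X'
    have hX'spec : spectrum ℂ X' ⊆ s '' spectrum ℂ A' := by
      intro z hz
      rw [aux_mem_spectrum_iff] at hz
      have hcols : ∀ i : Fin N, (z • (1 : Matrix (Fin (N+1)) (Fin (N+1)) ℂ) - X') i.succ 0 = 0 := by
        intro i
        simp [hX's0 i, Matrix.one_apply_ne (Fin.succ_ne_zero i)]
      rw [aux_det _ hcols] at hz
      have hsub : (z • (1 : Matrix (Fin (N+1)) (Fin (N+1)) ℂ) - X').submatrix Fin.succ Fin.succ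
          = z • (1 : Matrix (Fin N) (Fin N) ℂ) - Y := by
        ext i j
        by_cases h : i = j <;>
          simp [hX'ss, Matrix.one_apply, h, Fin.succ_inj]
      rw [hsub] at hz
      rcases mul_eq_zero.mp hz with h | h
      · have hz00 : (z • (1 : Matrix (Fin (N+1)) (Fin (N+1)) ℂ) - X') 0 0 = z - μ := by
          simp [hX'00, Matrix.one_apply]
        rw [hz00] at h
        exact ⟨μ₀, hμ₀spec, by rw [sub_eq_zero.mp h]⟩
      · have : z ∈ spectrum ℂ Y := by rw [aux_mem_spectrum_iff]; exact h
        obtain ⟨β, hβ, hsβ⟩ := hYspec this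
        exact ⟨β, hspecB hβ, hsβ⟩
    -- conjugate back
    refine ⟨P * X' * Q, ?_, ?_⟩
    · rw [pow_two]
      calc P * X' * Q * (P * X' * Q) = P * (X' * (Q * P) * X') * Q := by
            noncomm_ring
        _ = P * (X' * X') * Q := by rw [hQP, mul_one]
        _ = P * A' * Q := by rw [← pow_two, hX'sq]
        _ = (P * Q) * A * (P * Q) := by rw [hA'def]; noncomm_ring
        _ = A := by rw [hPQ, one_mul, mul_one]
    · have h1 : spectrum ℂ (P * X' * Q) = spectrum ℂ X' :=
        spectrum.units_conjugate (R := ℂ) (a := X') (u := u)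
      have h2 : spectrum ℂ A' = spectrum ℂ A := by
        have h2' := spectrum.units_conjugate' (R := ℂ) (a := A) (u := u)
        exact h2'
      rw [h1, ← h2]
      exact hX'spec

/-- Every invertible complex `n × n` matrix has a square root. -/
theorem exists_sqrt_of_isUnit_complex (n : ℕ) (A : Matrix (Fin n) (Fin n) ℂ)
    (hA : IsUnit A) :
    ∃ X : Matrix (Fin n) (Fin n) ℂ, X ^ 2 = A := by
  have hex : ∀ z : ℂ, ∃ w : ℂ, w ^ 2 = z := fun z =>
    IsAlgClosed.exists_pow_nat_eq z zero_lt_two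
  choose s hs using hex
  obtain ⟨X, hX, -⟩ := key_sqrt s hs n A hA
  exact ⟨X, hX⟩
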